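/- Let K be an n×n matrix such that K^c := (U_{i−1}^c)^H S K S U_{i−1}^c is Hermitian positive definite (an effectively positive definite preconditioner). Let u be a unit S-norm vector S-orthogonal to U_{i−1} with Rayleigh quotient λ = ρ(u) and nonzero residual r = Hu − λSu, let p = −Kr, and suppose λ is not an eigenvalue of (H,S). Then the matrix Z = [U_{i−1} u p] has full column rank. -/

import Mathlib

open Matrix
open scoped ComplexOrder

private lemma sum_shift {n m : ℕ} (hmn : m ≤ n) (f : Fin n → ℂ)
    (h0 : ∀ k : Fin n, (k : ℕ) < m → f k = 0) :
    ∑ k, f k = ∑ j : Fin (n - m), f ⟨m + j.1, by omega⟩ := by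
  set F : ℕ → ℂ := fun k => if h : k < n then f ⟨k, h⟩ else 0 with hF
  have h1 : ∑ k, f k = ∑ k ∈ Finset.range n, F k := by
    rw [← Fin.sum_univ_eq_sum_range]
    exact Finset.sum_congr rfl fun k _ => by simp [hF, k.is_lt]
  have h2 : ∑ j : Fin (n - m), f ⟨m + j.1, by omega⟩
      = ∑ j ∈ Finset.range (n - m), F (m + j) := by
    rw [← Fin.sum_univ_eq_sum_range]
    refine Finset.sum_congr rfl fun j _ => ?_
    have hj : m + (j : ℕ) < n := by omega
    simp [hF, hj]
  rw [h1, h2, ← Finset.sum_Ico_eq_sum_range, Finset.range_eq_Ico,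
    ← Finset.sum_Ico_consecutive _ (Nat.zero_le m) hmn]
  have hz : ∑ k ∈ Finset.Ico 0 m, F k = 0 := by
    refine Finset.sum_eq_zero fun k hk => ?_
    rw [Finset.mem_Ico] at hk
    have hkn : k < n := by omega
    simp [hF, hkn, h0 ⟨k, hkn⟩ hk.2]
  rw [hz, zero_add]

private lemma mulVec_sum' {n : ℕ} {ι : Type*} (s : Finset ι) (A : Matrix (Fin n) (Fin n) ℂ)
    (f : ι → Fin n → ℂ) : A *ᵥ (∑ i ∈ s, f i) = ∑ i ∈ s, A *ᵥ f i := by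
  funext k
  simp only [Matrix.mulVec, dotProduct, Finset.sum_apply, Finset.mul_sum]
  exact Finset.sum_comm

theorem stmt6 {n m : ℕ} (hmn : m < n)
    (H S U Λ K : Matrix (Fin n) (Fin n) ℂ) (lam : Fin n → ℝ)
    (hH : H.IsHermitian) (hS : S.PosDef)
    (hΛ : Λ = Matrix.diagonal fun k => (lam k : ℂ))
    (hmono : Monotone lam)
    (hortho : Uᴴ * S * U = 1)
    (heig : H * U = S * U * Λ)
    (u : Fin n → ℂ)
    (huorth : ∀ k : Fin n, (k : ℕ) < m → (Uᴴ *ᵥ (S *ᵥ u)) k = 0)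
    (hunorm : star u ⬝ᵥ (S *ᵥ u) = 1)
    (lam0 : ℝ) (hlam0 : (lam0 : ℂ) = star u ⬝ᵥ (H *ᵥ u))
    (hnoteig : ∀ k, lam0 ≠ lam k)
    (r : Fin n → ℂ) (hr : r = H *ᵥ u - (lam0 : ℂ) • (S *ᵥ u)) (hrne : r ≠ 0)
    (p : Fin n → ℂ) (hp : p = -(K *ᵥ r))
    (Kc : Matrix (Fin (n - m)) (Fin (n - m)) ℂ)
    (hKc : Kc = (Uᴴ * S * K * S * U).submatrix
      (fun k => (⟨m + k.1, by have := k.2; omega⟩ : Fin n))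
      (fun k => (⟨m + k.1, by have := k.2; omega⟩ : Fin n)))
    (hKcpd : Kc.PosDef)
    (cols : Fin (m + 2) → Fin n → ℂ)
    (hcols : cols = fun (j : Fin (m + 2)) (k : Fin n) =>
      if h : (j : ℕ) < m then U k ⟨(j : ℕ), by omega⟩
      else if (j : ℕ) = m then u k else p k) :
    LinearIndependent ℂ cols := by
  have hmn' : m ≤ n := hmn.le
  have hUT : U * (Uᴴ * S) = 1 := mul_eq_one_comm.mp hortho
  set uh : Fin n → ℂ := (Uᴴ * S) *ᵥ u with huh
  have huh' : ∀ k : Fin n, (k : ℕ) < m → uh k = 0 := by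
    intro k hk
    have h := huorth k hk
    rwa [Matrix.mulVec_mulVec] at h
  set w : Fin n → ℂ := fun k => ((lam k : ℂ) - lam0) * uh k with hwdef
  have hw0 : ∀ k : Fin n, (k : ℕ) < m → w k = 0 := fun k hk => by
    simp [hwdef, huh' k hk]
  have hrw : r = S *ᵥ (U *ᵥ w) := by
    have hwv : w = Λ *ᵥ uh - (lam0 : ℂ) • uh := by
      funext k
      simp only [hwdef, hΛ, Matrix.mulVec_diagonal, Pi.sub_apply, Pi.smul_apply, smul_eq_mul]
      ring
    have hH2 : H = S * U * Λ * (Uᴴ * S) := by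
      calc H = H * (U * (Uᴴ * S)) := by rw [hUT, Matrix.mul_one]
        _ = (H * U) * (Uᴴ * S) := by rw [Matrix.mul_assoc]
        _ = S * U * Λ * (Uᴴ * S) := by rw [heig]
    rw [hr, hwv, Matrix.mulVec_sub, Matrix.mulVec_sub, Matrix.mulVec_smul, Matrix.mulVec_smul]
    congr 1
    · rw [huh, Matrix.mulVec_mulVec, Matrix.mulVec_mulVec, Matrix.mulVec_mulVec, hH2]
    · rw [huh, Matrix.mulVec_mulVec, Matrix.mulVec_mulVec, Matrix.mul_assoc S U, hUT,
        Matrix.mul_one]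
  have hwne : w ≠ 0 := by
    intro h
    apply hrne
    rw [hrw, h, Matrix.mulVec_zero, Matrix.mulVec_zero]
  have hdot : star uh ⬝ᵥ w = 0 := by
    have hadj : (Uᴴ * S)ᴴ = S * U := by
      rw [Matrix.conjTranspose_mul, Matrix.conjTranspose_conjTranspose, hS.1]
    have h1 : star u ⬝ᵥ r = 0 := by
      rw [hr, dotProduct_sub, dotProduct_smul, hunorm, ← hlam0, smul_eq_mul, mul_one, sub_self]
    calc star uh ⬝ᵥ w = (star u ᵥ* (S * U)) ⬝ᵥ w := by rw [huh, star_mulVec, hadj]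
      _ = star u ⬝ᵥ ((S * U) *ᵥ w) := (dotProduct_mulVec _ _ _).symm
      _ = star u ⬝ᵥ r := by rw [← Matrix.mulVec_mulVec, ← hrw]
      _ = 0 := h1
  set ph : Fin n → ℂ := (Uᴴ * S) *ᵥ p with hph
  have hphw : ph = -((Uᴴ * S * K * S * U) *ᵥ w) := by
    rw [hph, hp, Matrix.mulVec_neg, hrw, Matrix.mulVec_mulVec, Matrix.mulVec_mulVec,
      Matrix.mulVec_mulVec]
  set wh : Fin (n - m) → ℂ := fun j => w ⟨m + j.1, by omega⟩ with hwh
  have hwhne : wh ≠ 0 := by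
    intro h
    apply hwne
    funext k
    by_cases hk : (k : ℕ) < m
    · exact hw0 k hk
    · have hk' : (k : ℕ) - m < n - m := by omega
      have h2 := congrFun h ⟨(k : ℕ) - m, hk'⟩
      have hkk : (⟨m + ((k : ℕ) - m), by omega⟩ : Fin n) = k :=
        Fin.ext (by simp; omega)
      simp only [hwh, hkk, Pi.zero_apply] at h2
      exact h2
  -- transformed columns
  have hcolU : ∀ jj : Fin n, (Uᴴ * S) *ᵥ (fun k => U k jj)
      = fun i => (1 : Matrix (Fin n) (Fin n) ℂ) i jj := by
    intro jj
    funext i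
    have h := congrFun (congrFun hortho i) jj
    rw [Matrix.mul_apply] at h
    simpa [Matrix.mulVec, dotProduct, Matrix.mul_apply] using h
  have hTcols : ∀ j : Fin (m + 2), (Uᴴ * S) *ᵥ cols j =
      if h : (j : ℕ) < m then (fun i => (1 : Matrix (Fin n) (Fin n) ℂ) i ⟨(j : ℕ), by omega⟩)
      else if (j : ℕ) = m then uh else ph := by
    intro j
    by_cases h1 : (j : ℕ) < m
    · rw [dif_pos h1]
      have hc : cols j = fun k => U k ⟨(j : ℕ), by omega⟩ := by
        rw [hcols]; simp [h1]
      rw [hc, hcolU]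
    · rw [dif_neg h1]
      by_cases h2 : (j : ℕ) = m
      · rw [if_pos h2]
        have hc : cols j = u := by rw [hcols]; funext k; simp [h1, h2]
        rw [hc, huh]
      · rw [if_neg h2]
        have hc : cols j = p := by rw [hcols]; funext k; simp [h1, h2]
        rw [hc, hph]
  rw [Fintype.linearIndependent_iff]
  intro g hg
  have hg2 : ∑ j, g j • ((Uᴴ * S) *ᵥ cols j) = 0 := by
    have h := congrArg (fun v => (Uᴴ * S) *ᵥ v) hg
    simp only [Matrix.mulVec_zero] at h
    rw [mulVec_sum'] at h
    simpa [Matrix.mulVec_smul] using h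
  set b : ℂ := g ⟨m, by omega⟩ with hbdef
  set c : ℂ := g ⟨m + 1, by omega⟩ with hcdef
  have key1 : ∀ k : Fin n,
      (∑ j : Fin m, g ⟨(j : ℕ), by omega⟩ * (1 : Matrix (Fin n) (Fin n) ℂ) k ⟨(j : ℕ), by omega⟩)
        + b * uh k + c * ph k = 0 := by
    intro k
    have tA : ∀ j : Fin m, (g j.castSucc.castSucc • ((Uᴴ * S) *ᵥ cols j.castSucc.castSucc)) k
        = g ⟨(j : ℕ), by omega⟩ * (1 : Matrix (Fin n) (Fin n) ℂ) k ⟨(j : ℕ), by omega⟩ := by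
      intro j
      rw [hTcols, dif_pos (show ((j.castSucc.castSucc : Fin (m + 2)) : ℕ) < m from j.2)]
      rfl
    have tB : (g (Fin.last m).castSucc • ((Uᴴ * S) *ᵥ cols (Fin.last m).castSucc)) k
        = b * uh k := by
      rw [hTcols, dif_neg (show ¬ (((Fin.last m).castSucc : Fin (m + 2)) : ℕ) < m from lt_irrefl m),
        if_pos (show (((Fin.last m).castSucc : Fin (m + 2)) : ℕ) = m from rfl)]
      rfl
    have tC : (g (Fin.last (m + 1)) • ((Uᴴ * S) *ᵥ cols (Fin.last (m + 1)))) k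
        = c * ph k := by
      rw [hTcols, dif_neg (show ¬ ((Fin.last (m + 1) : Fin (m + 2)) : ℕ) < m by simp [Fin.last]),
        if_neg (show ¬ ((Fin.last (m + 1) : Fin (m + 2)) : ℕ) = m by simp [Fin.last])]
      rfl
    have h := congrFun hg2 k
    simp only [Finset.sum_apply, Pi.zero_apply] at h
    rw [Fin.sum_univ_castSucc, Fin.sum_univ_castSucc] at h
    rw [tB, tC] at h
    rw [← h]
    congr 2
    exact Finset.sum_congr rfl fun j _ => (tA j).symm
  have key2 : ∀ k : Fin n, m ≤ (k : ℕ) → b * uh k + c * ph k = 0 := by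
    intro k hk
    have h := key1 k
    have hz : (∑ j : Fin m, g ⟨(j : ℕ), by omega⟩
        * (1 : Matrix (Fin n) (Fin n) ℂ) k ⟨(j : ℕ), by omega⟩) = 0 := by
      refine Finset.sum_eq_zero fun j _ => ?_
      rw [Matrix.one_apply_ne (Fin.ne_of_val_ne (by simp; omega)), mul_zero]
    rw [hz, zero_add] at h
    linear_combination h
  -- c = 0
  have hq : star w ⬝ᵥ ph = -(star wh ⬝ᵥ (Kc *ᵥ wh)) := by
    rw [hphw, dotProduct_neg]
    congr 1
    have e2 : ∀ (j : Fin (n - m)) (hj : m + (j : ℕ) < n),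
        ((Uᴴ * S * K * S * U) *ᵥ w) ⟨m + (j : ℕ), hj⟩ = (Kc *ᵥ wh) j := by
      intro j hj
      show ∑ l, (Uᴴ * S * K * S * U) ⟨m + (j : ℕ), hj⟩ l * w l = ∑ i, Kc j i * wh i
      rw [sum_shift hmn' _ (fun l hl => by rw [hw0 l hl, mul_zero])]
      refine Finset.sum_congr rfl fun i _ => ?_
      rw [hKc, Matrix.submatrix_apply]
    show ∑ k, star w k * ((Uᴴ * S * K * S * U) *ᵥ w) k = ∑ j, star wh j * (Kc *ᵥ wh) j
    rw [sum_shift hmn' _ (fun k hk => by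
      rw [Pi.star_apply, hw0 k hk, star_zero, zero_mul])]
    refine Finset.sum_congr rfl fun j _ => ?_
    exact congrArg₂ (· * ·) rfl (e2 j (by omega))
  have h1 : star w ⬝ᵥ uh = 0 := by
    have h2 : star (star uh ⬝ᵥ w) = 0 := by rw [hdot, star_zero]
    rw [← h2]
    simp [dotProduct, mul_comm]
  have hsum1 : b * (star w ⬝ᵥ uh) + c * (star w ⬝ᵥ ph) = 0 := by
    have hsum0 : ∑ k, star (w k) * (b * uh k + c * ph k) = 0 :=
      Finset.sum_eq_zero fun k _ => by
        by_cases hk : m ≤ (k : ℕ)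
        · rw [key2 k hk, mul_zero]
        · rw [hw0 k (by omega)]; simp
    rw [← hsum0, dotProduct, dotProduct, Finset.mul_sum, Finset.mul_sum,
      ← Finset.sum_add_distrib]
    refine Finset.sum_congr rfl fun k _ => ?_
    simp only [Pi.star_apply]
    ring
  have hc0 : c = 0 := by
    by_contra hcne
    have hpos : 0 < star wh ⬝ᵥ (Kc *ᵥ wh) := hKcpd.dotProduct_mulVec_pos hwhne
    rw [h1, mul_zero, zero_add, hq, mul_neg, neg_eq_zero] at hsum1
    rcases mul_eq_zero.mp hsum1 with h | h
    · exact hcne h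
    · exact (ne_of_gt hpos) h
  have hb0 : b = 0 := by
    obtain ⟨k0, hk0⟩ : ∃ k, w k ≠ 0 := by
      by_contra h
      push_neg at h
      exact hwne (funext fun k => h k)
    have hk0m : m ≤ (k0 : ℕ) := by
      by_contra h
      exact hk0 (hw0 k0 (by omega))
    have huk0 : uh k0 ≠ 0 := by
      intro h
      apply hk0
      simp [hwdef, h]
    have h := key2 k0 hk0m
    rw [hc0, zero_mul, add_zero] at h
    exact (mul_eq_zero.mp h).resolve_right huk0
  intro j
  rcases lt_trichotomy (j : ℕ) m with hj | hj | hj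
  · have hk := key1 ⟨(j : ℕ), by omega⟩
    rw [hc0, hb0, zero_mul, zero_mul, add_zero, add_zero] at hk
    rw [Finset.sum_eq_single (⟨(j : ℕ), hj⟩ : Fin m)] at hk
    · rw [Matrix.one_apply_eq] at hk
      rw [mul_one] at hk
      exact hk
    · intro j' _ hj'
      rw [Matrix.one_apply_ne, mul_zero]
      exact Fin.ne_of_val_ne (by simpa using fun h => hj' (Fin.ext h.symm))
    · intro h
      exact absurd (Finset.mem_univ _) h
  · have : j = ⟨m, by omega⟩ := Fin.ext hj
    rw [this, ← hbdef]; exact hb0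
  · have hj2 := j.2
    have : j = ⟨m + 1, by omega⟩ := Fin.ext (show (j : ℕ) = m + 1 by omega)
    rw [this, ← hcdef]; exact hc0
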